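/- For every integer $m \geq 2$ and every $\varepsilon \in (0, 1 - 1/m]$, there exist a finite alphabet $\mathcal{X}$, a finite alphabet $\mathcal{Y}$ with $|\mathcal{Y}| = m$, and joint probability distributions $p_{XY}, q_{XY}$ on $\mathcal{X} \times \mathcal{Y}$ such that $\tfrac{1}{2}\sum_{x,y}|p_{XY}(x,y) - q_{XY}(x,y)| \leq \varepsilon$ and $|H(Y|X)_p - H(Y|X)_q| = \varepsilon \log_2(m - 1) + h_2(\varepsilon)$. -/

import Mathlib

open scoped BigOperators

/-- Conditional Shannon entropy H(Y|X) of a joint distribution `p` on `𝓧 × 𝓨`,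
with the sum restricted to those `x` whose marginal `pₓ(x)` is positive and with
the convention `0 · log₂ 0 = 0` (automatic since `Real.logb 2 0 = 0`). -/
noncomputable def condShannonEntropy {𝓧 𝓨 : Type*} [Fintype 𝓧] [Fintype 𝓨]
    (p : 𝓧 → 𝓨 → ℝ) : ℝ :=
  -∑ x, if 0 < ∑ y, p x y then
      (∑ y, p x y) *
        ∑ y, (p x y / ∑ y', p x y') * Real.logb 2 (p x y / ∑ y', p x y')
    else 0

noncomputable def binEntropy (ε : ℝ) : ℝ :=
  -ε * Real.logb 2 ε - (1 - ε) * Real.logb 2 (1 - ε)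

lemma key_sum (m : ℕ) [NeZero m] (hm : 2 ≤ m) (A B : ℝ) :
    ∑ y : Fin m, (if y = 0 then A else B) = A + ((m : ℝ) - 1) * B := by
  rw [Fintype.sum_eq_add_sum_compl 0, if_pos rfl]
  congr 1
  rw [Finset.sum_congr rfl (fun y hy => if_neg (by simpa using hy)),
    Finset.sum_const, Finset.card_compl, Finset.card_singleton, Fintype.card_fin,
    nsmul_eq_mul, Nat.cast_sub (by omega), Nat.cast_one]

/-- Optimality of the Alhejji–Smith bound: for every alphabet size m ≥ 2 and
every admissible ε there is a saturating pair of joint distributions. -/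
theorem classical_conditional_entropy_bound_saturated
    (m : ℕ) (hm : 2 ≤ m) (ε : ℝ) (hε0 : 0 < ε) (hε1 : ε ≤ 1 - 1 / (m : ℝ)) :
    ∃ (𝓧 : Type) (_ : Fintype 𝓧) (𝓨 : Type) (_ : Fintype 𝓨),
      Fintype.card 𝓨 = m ∧
      ∃ p q : 𝓧 → 𝓨 → ℝ,
        (∀ x y, 0 ≤ p x y) ∧ (∑ x, ∑ y, p x y = 1) ∧
        (∀ x y, 0 ≤ q x y) ∧ (∑ x, ∑ y, q x y = 1) ∧
        (1 / 2) * (∑ x, ∑ y, |p x y - q x y|) ≤ ε ∧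
        |condShannonEntropy p - condShannonEntropy q| =
          ε * Real.logb 2 ((m : ℝ) - 1) + binEntropy ε := by
  haveI : NeZero m := ⟨by omega⟩
  have hm2 : (2 : ℝ) ≤ (m : ℝ) := by exact_mod_cast hm
  have hm1 : (1 : ℝ) ≤ (m : ℝ) - 1 := by linarith
  have hm1pos : (0 : ℝ) < (m : ℝ) - 1 := by linarith
  have hε1' : ε < 1 := by
    have : (0 : ℝ) < 1 / (m : ℝ) := by positivity
    linarith
  set a : ℝ := ε / ((m : ℝ) - 1) with ha
  have ha0 : 0 ≤ a := div_nonneg hε0.le hm1pos.le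
  have hma : ((m : ℝ) - 1) * a = ε := by rw [ha]; field_simp [hm1pos.ne']
  refine ⟨Unit, inferInstance, Fin m, inferInstance, by simp, ?_⟩
  refine ⟨(fun _ y => if y = 0 then 1 else 0), (fun _ y => if y = 0 then 1 - ε else a),
    ?_, ?_, ?_, ?_, ?_, ?_⟩
  · intro x y; dsimp only; split <;> norm_num
  · simp [key_sum m hm 1 0]
  · intro x y; dsimp only; split
    · linarith
    · exact ha0
  · simp [key_sum m hm (1 - ε) a, hma]
  · have h1 : ∑ y : Fin m,
        |(if y = 0 then (1:ℝ) else 0) - (if y = 0 then 1 - ε else a)| = 2 * ε := by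
      have : ∀ y : Fin m,
          |(if y = 0 then (1:ℝ) else 0) - (if y = 0 then 1 - ε else a)| =
          (if y = 0 then ε else a) := by
        intro y; split
        · rw [show (1:ℝ) - (1 - ε) = ε by ring, abs_of_nonneg hε0.le]
        · rw [show (0:ℝ) - a = -a by ring, abs_neg, abs_of_nonneg ha0]
      rw [Finset.sum_congr rfl (fun y _ => this y), key_sum m hm ε a, hma]; ring
    simp only [Fintype.sum_unique] at *
    rw [h1]; linarith
  · have hps : ∑ y : Fin m, (if y = 0 then (1:ℝ) else 0) = 1 := by
      simp [key_sum m hm 1 0]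
    have hqs : ∑ y : Fin m, (if y = 0 then (1:ℝ) - ε else a) = 1 := by
      simp [key_sum m hm (1 - ε) a, hma]
    have hp : condShannonEntropy (fun (_ : Unit) (y : Fin m) => if y = 0 then (1:ℝ) else 0) = 0 := by
      unfold condShannonEntropy
      rw [Fintype.sum_unique]
      simp only [hps, if_pos one_pos, div_one, one_mul]
      have : ∀ y : Fin m, (if y = 0 then (1:ℝ) else 0) *
          Real.logb 2 (if y = 0 then (1:ℝ) else 0) = 0 := by
        intro y; split <;> simp
      rw [Finset.sum_congr rfl (fun y _ => this y)]; simp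
    have hq : condShannonEntropy (fun (_ : Unit) (y : Fin m) => if y = 0 then (1:ℝ) - ε else a)
        = ε * Real.logb 2 ((m : ℝ) - 1) + binEntropy ε := by
      unfold condShannonEntropy
      rw [Fintype.sum_unique]
      simp only [hqs, if_pos one_pos, div_one, one_mul]
      have : ∀ y : Fin m, (if y = 0 then (1:ℝ) - ε else a) *
          Real.logb 2 (if y = 0 then (1:ℝ) - ε else a) =
          (if y = 0 then (1 - ε) * Real.logb 2 (1 - ε) else a * Real.logb 2 a) := by
        intro y; split <;> rfl
      rw [Finset.sum_congr rfl (fun y _ => this y),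
        key_sum m hm ((1 - ε) * Real.logb 2 (1 - ε)) (a * Real.logb 2 a)]
      have hla : Real.logb 2 a = Real.logb 2 ε - Real.logb 2 ((m : ℝ) - 1) := by
        rw [ha, Real.logb_div (ne_of_gt hε0) (ne_of_gt hm1pos)]
      rw [hla, binEntropy]
      have : ((m : ℝ) - 1) * (a * (Real.logb 2 ε - Real.logb 2 ((m : ℝ) - 1))) =
          ε * Real.logb 2 ε - ε * Real.logb 2 ((m : ℝ) - 1) := by
        rw [← mul_assoc, hma]; ring
      rw [this]; ring
    rw [hp, hq, zero_sub, abs_neg, abs_of_nonneg]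
    have h1 : 0 ≤ Real.logb 2 ((m : ℝ) - 1) := Real.logb_nonneg one_lt_two hm1
    have h2 : Real.logb 2 ε ≤ 0 := Real.logb_nonpos one_lt_two hε0.le hε1'.le
    have h3 : Real.logb 2 (1 - ε) ≤ 0 := Real.logb_nonpos one_lt_two (by linarith) (by linarith)
    have h4 : 0 ≤ binEntropy ε := by
      unfold binEntropy
      nlinarith
    positivity
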